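/- Let A be an n×n complex matrix and N Hermitian positive definite. If A is weighted normal with respect to N (A A^# = A^# A where A^# = N^{-1} A* N), then A commutes with its weighted Moore-Penrose inverse: A A†_{N,N} = A†_{N,N} A. -/
import Mathlib


open Matrix Filter Topology
open scoped ComplexOrder

/-- The four equations characterizing the weighted Moore-Penrose inverse of `A`
with respect to the weights `(M, N)`. -/
def IsWMP {m n : ℕ} (M : Matrix (Fin m) (Fin m) ℂ) (N : Matrix (Fin n) (Fin n) ℂ)
    (A : Matrix (Fin m) (Fin n) ℂ) (X : Matrix (Fin n) (Fin m) ℂ) : Prop :=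
  A * X * A = A ∧ X * A * X = X ∧ (M * A * X)ᴴ = M * A * X ∧ (N * X * A)ᴴ = N * X * A

/-- if A is weighted normal w.r.t. N, then A commutes with A†_{N,N}. -/
theorem stmt_11 {n : ℕ} (A N : Matrix (Fin n) (Fin n) ℂ) (hN : N.PosDef)
    (hnormal : A * (N⁻¹ * Aᴴ * N) = (N⁻¹ * Aᴴ * N) * A)
    (X : Matrix (Fin n) (Fin n) ℂ) (hX : IsWMP N N A X) :
    A * X = X * A := by
  obtain ⟨h1, h2, h3, h4⟩ := hX
  have hdet : IsUnit N.det := (Matrix.isUnit_iff_isUnit_det _).1 hN.isUnit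
  have hNinv : N⁻¹ * N = 1 := Matrix.nonsing_inv_mul N hdet
  have hNinv' : N * N⁻¹ = 1 := Matrix.mul_nonsing_inv N hdet
  have hNH : Nᴴ = N := hN.isHermitian
  set A' : Matrix (Fin n) (Fin n) ℂ := N⁻¹ * Aᴴ * N with hA'
  set X' : Matrix (Fin n) (Fin n) ℂ := N⁻¹ * Xᴴ * N with hX'
  -- conjugation is multiplicative
  have key : ∀ (U V : Matrix (Fin n) (Fin n) ℂ),
      (N⁻¹ * U * N) * (N⁻¹ * V * N) = N⁻¹ * (U * V) * N := by
    intro U V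
    calc (N⁻¹ * U * N) * (N⁻¹ * V * N) = N⁻¹ * (U * ((N * N⁻¹) * V)) * N := by noncomm_ring
      _ = N⁻¹ * (U * V) * N := by rw [hNinv', Matrix.one_mul]
  -- rewrite the hermitian conditions
  have e3 : Xᴴ * (Aᴴ * N) = N * (A * X) := by
    have := h3
    simp only [conjTranspose_mul, hNH, Matrix.mul_assoc] at this
    exact this
  have e4 : Aᴴ * (Xᴴ * N) = N * (X * A) := by
    have := h4
    simp only [conjTranspose_mul, hNH, Matrix.mul_assoc] at this
    exact this
  -- σ(AX) = AX and σ(XA) = XA, in the form X'A' = AX, A'X' = XA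
  have e3' : X' * A' = A * X := by
    rw [hX', hA', key, Matrix.mul_assoc, Matrix.mul_assoc, e3, ← Matrix.mul_assoc,
      hNinv, Matrix.one_mul]
  have e4' : A' * X' = X * A := by
    rw [hA', hX', key, Matrix.mul_assoc, Matrix.mul_assoc, e4, ← Matrix.mul_assoc,
      hNinv, Matrix.one_mul]
  -- normality
  have h5 : A * A' = A' * A := hnormal
  -- h6 : A' * (A * X) = A'
  have h6 : A' * (A * X) = A' := by
    calc A' * (A * X) = N⁻¹ * (Aᴴ * (N * (A * X))) := by rw [hA']; noncomm_ring
      _ = N⁻¹ * (Aᴴ * (Xᴴ * (Aᴴ * N))) := by rw [e3]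
      _ = N⁻¹ * ((A * X * A)ᴴ * N) := by
            rw [conjTranspose_mul, conjTranspose_mul]; noncomm_ring
      _ = N⁻¹ * (Aᴴ * N) := by rw [h1]
      _ = A' := by rw [hA']; noncomm_ring
  -- h7 : (X * A) * A' = A'
  have h7 : X * A * A' = A' := by
    have hXA : X * A = N⁻¹ * (Aᴴ * Xᴴ) * N := by
      rw [Matrix.mul_assoc, Matrix.mul_assoc, e4, ← Matrix.mul_assoc, hNinv, Matrix.one_mul]
    calc X * A * A' = (N⁻¹ * (Aᴴ * Xᴴ) * N) * (N⁻¹ * Aᴴ * N) := by rw [← hXA, hA']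
      _ = N⁻¹ * ((A * X * A)ᴴ * N) := by
            rw [key, conjTranspose_mul, conjTranspose_mul]; noncomm_ring
      _ = N⁻¹ * (Aᴴ * N) := by rw [h1]
      _ = A' := by rw [hA']; noncomm_ring
  -- hC : A = A' * A * X'
  have hC : A = A' * A * X' := by
    calc A = A * (X * A) := by rw [← Matrix.mul_assoc, h1]
      _ = A * (A' * X') := by rw [e4']
      _ = (A * A') * X' := by noncomm_ring
      _ = A' * A * X' := by rw [h5]
  -- hD : A' = A * A' * X
  have hD : A' = A * A' * X := by
    calc A' = A' * (A * X) := h6.symm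
      _ = (A' * A) * X := by noncomm_ring
      _ = A * A' * X := by rw [← h5]
  -- Q = A A' X X'
  have hQeq : X * A = A * A' * X * X' := by
    calc X * A = A' * X' := e4'.symm
      _ = (A * A' * X) * X' := by rw [← hD]
  -- PQ = Q
  have hPQ : (A * X) * (X * A) = X * A := by
    calc (A * X) * (X * A) = (A * X) * (A * A' * X * X') := by rw [hQeq]
      _ = ((A * X) * A) * (A' * X * X') := by noncomm_ring
      _ = A * (A' * X * X') := by rw [h1]
      _ = A * A' * X * X' := by noncomm_ring
      _ = X * A := hQeq.symm
  -- P = A' (A X' X)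
  have hPeq : A * X = A' * (A * X' * X) := by
    calc A * X = (A' * A * X') * X := by rw [← hC]
      _ = A' * (A * X' * X) := by noncomm_ring
  -- QP = P
  have hQP : (X * A) * (A * X) = A * X := by
    calc (X * A) * (A * X) = (X * A) * (A' * (A * X' * X)) := by rw [← hPeq]
      _ = (X * A * A') * (A * X' * X) := by noncomm_ring
      _ = A' * (A * X' * X) := by rw [h7]
      _ = A * X := hPeq.symm
  -- finish: P = σ(P) = σ(QP) = σ(P)σ(Q) = PQ = Q
  have hsP : A * X = N⁻¹ * (A * X)ᴴ * N := by
    rw [conjTranspose_mul, ← e3', hX', hA', key]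
  have hsQ : X * A = N⁻¹ * (X * A)ᴴ * N := by
    rw [conjTranspose_mul, ← e4', hX', hA', key]
  calc A * X = N⁻¹ * ((X * A) * (A * X))ᴴ * N := by rw [hQP]; exact hsP
    _ = (N⁻¹ * (A * X)ᴴ * N) * (N⁻¹ * (X * A)ᴴ * N) := by rw [conjTranspose_mul, key]
    _ = (A * X) * (X * A) := by rw [← hsP, ← hsQ]
    _ = X * A := hPQ
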